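/- Let S be a monoid acting faithfully on a countable set Ω and carrying the topology of pointwise convergence, and suppose every right congruence on S with countably many classes is open in S × S. Then every monoid homomorphism from S to a topological semigroup arising as a closed submonoid of Ω'^Ω' for a countable set Ω' is continuous. Conversely, if every such homomorphism is continuous, then every right congruence on S with countably many classes is open. -/
import Mathlib


private lemma cont_of_fibers {X Y : Type*} [TopologicalSpace X] [TopologicalSpace Y]
    [DiscreteTopology Y] (f : X → Y) (h : ∀ b : Y, IsOpen (f ⁻¹' {b})) : Continuous f := by
  rw [continuous_def]
  intro s _
  have hs : f ⁻¹' s = ⋃ b ∈ s, f ⁻¹' {b} := by ext x; simp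
  rw [hs]
  exact isOpen_biUnion fun b _ => h b

/-- Let S be a transformation monoid on a countable set Ω with the pointwise
convergence topology. Then every right congruence on S with countably many classes is open
in S × S if and only if every monoid homomorphism from S to a closed transformation monoid
on a countable set is continuous. -/
theorem stmt_6 {Ω : Type*} [Countable Ω] [TopologicalSpace Ω] [DiscreteTopology Ω]
    (S : Set (Ω → Ω)) (hid : id ∈ S)
    (hcomp : ∀ f ∈ S, ∀ g ∈ S, f ∘ g ∈ S) :
    (∀ E : Setoid ↥S, Countable (Quotient E) →
        (∀ g f : ↥S, E.r g f → ∀ h : ↥S,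
          E.r ⟨(h : Ω → Ω) ∘ (g : Ω → Ω), hcomp _ h.2 _ g.2⟩
              ⟨(h : Ω → Ω) ∘ (f : Ω → Ω), hcomp _ h.2 _ f.2⟩) →
        IsOpen {p : ↥S × ↥S | E.r p.1 p.2}) ↔
    (∀ (Ω' : Type) [Countable Ω'] [TopologicalSpace Ω'] [DiscreteTopology Ω']
        (T : Set (Ω' → Ω')), id ∈ T → (∀ f ∈ T, ∀ g ∈ T, f ∘ g ∈ T) → IsClosed T →
        ∀ φ : (Ω → Ω) → (Ω' → Ω'), Set.MapsTo φ S T → φ id = id →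
          (∀ f ∈ S, ∀ g ∈ S, φ (f ∘ g) = φ f ∘ φ g) →
          ContinuousOn φ S) := by
  constructor
  · -- SIP → automatic continuity
    intro hSIP Ω' _ _ _ T hTid hTcomp hTcl φ hmaps hφid hφcomp
    rw [continuousOn_iff_continuous_restrict]
    apply continuous_pi
    intro ω'
    apply cont_of_fibers
    intro b
    -- the fiber
    rcases Set.eq_empty_or_nonempty ((fun s : ↥S => φ s.1 ω') ⁻¹' {b}) with he | ⟨a, ha⟩
    · simpa [Set.restrict] using he ▸ isOpen_empty
    · -- define the right congruence
      set E : Setoid ↥S :=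
        ⟨fun g f => φ g.1 ω' = φ f.1 ω', ⟨fun _ => rfl, Eq.symm, Eq.trans⟩⟩ with hE
      have hcount : Countable (Quotient E) := by
        have hinj : Function.Injective
            (Quotient.lift (fun g : ↥S => φ g.1 ω') (fun a b h => h) : Quotient E → Ω') := by
          rintro ⟨x⟩ ⟨y⟩ h
          exact Quotient.sound h
        exact hinj.countable
      have hcong : ∀ g f : ↥S, E.r g f → ∀ h : ↥S,
          E.r ⟨(h : Ω → Ω) ∘ (g : Ω → Ω), hcomp _ h.2 _ g.2⟩
              ⟨(h : Ω → Ω) ∘ (f : Ω → Ω), hcomp _ h.2 _ f.2⟩ := by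
        intro g f hgf h
        show φ (h.1 ∘ g.1) ω' = φ (h.1 ∘ f.1) ω'
        rw [hφcomp _ h.2 _ g.2, hφcomp _ h.2 _ f.2]
        simp only [Function.comp_apply]
        rw [hgf]
      have hopen := hSIP E hcount hcong
      have : (fun s : ↥S => φ s.1 ω') ⁻¹' {b} =
          (fun s : ↥S => (s, a)) ⁻¹' {p : ↥S × ↥S | E.r p.1 p.2} := by
        ext s
        simp only [Set.mem_preimage, Set.mem_singleton_iff, Set.mem_setOf_eq]
        constructor
        · intro h; show φ s.1 ω' = φ a.1 ω'; rw [h]; exact ha.symm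
        · intro h; exact h.trans ha
      show IsOpen ((fun s : ↥S => φ s.1 ω') ⁻¹' {b})
      rw [this]
      exact hopen.preimage (continuous_id.prodMk continuous_const)
  · -- automatic continuity → SIP
    intro hAC E hcount hcong
    classical
    -- build the action on the quotient, transported to a Type-0 copy
    obtain ⟨ι, hι⟩ := (Countable.exists_injective_nat (Quotient E))
    set Ω' : Type := ↥(Set.range ι) with hΩ'
    letI : TopologicalSpace Ω' := ⊥
    haveI : DiscreteTopology Ω' := ⟨rfl⟩
    let e : Quotient E ≃ Ω' := Equiv.ofInjective ι hι
    let act : ↥S → Quotient E → Quotient E := fun h =>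
      Quotient.map (fun t : ↥S => (⟨h.1 ∘ t.1, hcomp _ h.2 _ t.2⟩ : ↥S))
        (fun a b hab => hcong a b hab h)
    let φ : (Ω → Ω) → (Ω' → Ω') := fun f =>
      if hf : f ∈ S then fun x => e (act ⟨f, hf⟩ (e.symm x)) else id
    have hφ : ∀ (f : Ω → Ω) (hf : f ∈ S) (x : Ω'),
        φ f x = e (act ⟨f, hf⟩ (e.symm x)) := by
      intro f hf x; simp only [φ, dif_pos hf]
    have hφid : φ id = id := by
      funext x
      rw [hφ id hid x]
      have : act ⟨id, hid⟩ (e.symm x) = e.symm x := by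
        induction e.symm x using Quotient.ind with
        | _ t => exact congrArg (Quotient.mk E) (Subtype.ext rfl)
      rw [this, e.apply_symm_apply]; rfl
    have hφcomp : ∀ f ∈ S, ∀ g ∈ S, φ (f ∘ g) = φ f ∘ φ g := by
      intro f hf g hg
      funext x
      simp only [Function.comp_apply]
      rw [hφ _ (hcomp _ hf _ hg), hφ g hg, hφ f hf, e.symm_apply_apply]
      congr 1
      induction e.symm x using Quotient.ind with
      | _ t => exact congrArg (Quotient.mk E) (Subtype.ext rfl)
    have hcontOn := hAC Ω' Set.univ trivial (fun _ _ _ _ => trivial) isClosed_univ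
      φ (Set.mapsTo_univ _ _) hφid hφcomp
    -- express the congruence via φ
    have key : ∀ g : ↥S, φ g.1 (e ⟦(⟨id, hid⟩ : ↥S)⟧) = e ⟦g⟧ := by
      intro g
      rw [hφ g.1 g.2, e.symm_apply_apply]
      congr 1
    have hset : {p : ↥S × ↥S | E.r p.1 p.2} =
        (fun p : ↥S × ↥S => (φ p.1.1 (e ⟦(⟨id, hid⟩ : ↥S)⟧), φ p.2.1 (e ⟦(⟨id, hid⟩ : ↥S)⟧)))
          ⁻¹' {q : Ω' × Ω' | q.1 = q.2} := by
      ext p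
      simp only [Set.mem_setOf_eq, Set.mem_preimage, key, e.apply_eq_iff_eq, Quotient.eq]
    rw [hset]
    have hF : Continuous fun s : ↥S => φ s.1 (e ⟦(⟨id, hid⟩ : ↥S)⟧) := by
      have := continuousOn_iff_continuous_restrict.mp hcontOn
      exact (continuous_apply _).comp this
    exact IsOpen.preimage ((hF.comp continuous_fst).prodMk (hF.comp continuous_snd))
      (isOpen_discrete _)
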